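/- arXiv:1009.2837 — 2 statements merged into one kernel-verified Lean document; each statement's English description precedes it below -/
import Mathlib

section
/- For every t ∈ [0,T] and every q ∈ Q(t), the proximal normal cone to Q(t) at q decomposes as N(Q(t), q) = Σ_{i=1}^p N(Q_i(t), q) = − Σ_{i ∈ I(t,q)} ℝ⁺ ∇_q g_i(t,q), where I(t,q) := {i : g_i(t,q) = 0} is the active set at q. -/
open Set Metric
open Classical

noncomputable section

variable {d p : ℕ}

local notation "E" => EuclideanSpace ℝ (Fin d)

/-- The set of nearest points of `S` to `x` (Euclidean projection `P_S(x)`). -/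
def projSet (S : Set E) (x : E) : Set E :=
  {z | z ∈ S ∧ dist x z = infDist x S}

/-- The proximal normal cone `N(S,x)`. -/
def proxNormalCone (S : Set E) (x : E) : Set E :=
  {v | ∃ a : ℝ, 0 < a ∧ x ∈ projSet S (x + a • v)}

/-- The feasible set `Q(t) = ∩ᵢ {q | gᵢ(t,q) ≥ 0}`. -/
def Qset (g : Fin p → ℝ → E → ℝ) (t : ℝ) : Set E :=
  {q | ∀ i, 0 ≤ g i t q}

local notation "⟪" x ", " y "⟫" => @inner ℝ _ _ x y

lemma le_infDist' {S : Set E} (hs : S.Nonempty) {x : E} {r : ℝ}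
    (H : ∀ y ∈ S, r ≤ dist x y) : r ≤ infDist x S := by
  by_contra h
  push_neg at h
  obtain ⟨y, hy, hlt⟩ := (infDist_lt_iff hs).1 h
  exact absurd (H y hy) (not_le.2 hlt)

lemma sq_le_sq_of_nonneg {x y : ℝ} (hx : 0 ≤ x) (hy : 0 ≤ y) (h : x^2 ≤ y^2) : x ≤ y := by
  nlinarith

/-- membership criterion for the proximal normal cone -/
lemma mem_proxNormalCone_of_forall {S : Set E} {q v : E} (hq : q ∈ S) {α : ℝ} (hα : 0 < α)
    (H : ∀ y ∈ S, 2 * α * ⟪v, y - q⟫ ≤ ‖y - q‖^2) : v ∈ proxNormalCone S q := by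
  refine ⟨α, hα, hq, ?_⟩
  have hd : dist (q + α • v) q = α * ‖v‖ := by
    rw [dist_eq_norm]
    simp [norm_smul, abs_of_pos hα]
  rw [hd]
  refine le_antisymm ?_ (by rw [← hd]; exact infDist_le_dist_of_mem hq)
  refine le_infDist' ⟨q, hq⟩ ?_
  intro y hy
  rw [dist_eq_norm]
  have hexp : ‖q + α • v - y‖^2 = α^2 * ‖v‖^2 - 2 * α * ⟪v, y - q⟫ + ‖y - q‖^2 := by
    have : q + α • v - y = α • v - (y - q) := by abel
    rw [this, norm_sub_sq_real, real_inner_smul_left, norm_smul]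
    simp [abs_of_pos hα]
    ring
  refine sq_le_sq_of_nonneg (by positivity) (norm_nonneg _) ?_
  rw [mul_pow, hexp]
  nlinarith [H y hy]

/-- the fundamental inequality satisfied by proximal normals -/
lemma proxNormalCone_spec {S : Set E} {q v : E} (hv : v ∈ proxNormalCone S q) :
    q ∈ S ∧ ∃ α : ℝ, 0 < α ∧ ∀ y ∈ S, 2 * α * ⟪v, y - q⟫ ≤ ‖y - q‖^2 := by
  obtain ⟨α, hα, hqS, hproj⟩ := hv
  refine ⟨hqS, α, hα, ?_⟩
  intro y hy
  have h1 : dist (q + α • v) q = α * ‖v‖ := by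
    rw [dist_eq_norm]; simp [norm_smul, abs_of_pos hα]
  have h2 : α * ‖v‖ ≤ dist (q + α • v) y := by
    rw [← h1, hproj]; exact infDist_le_dist_of_mem hy
  rw [dist_eq_norm] at h2
  have hexp : ‖q + α • v - y‖^2 = α^2 * ‖v‖^2 - 2 * α * ⟪v, y - q⟫ + ‖y - q‖^2 := by
    have : q + α • v - y = α • v - (y - q) := by abel
    rw [this, norm_sub_sq_real, real_inner_smul_left, norm_smul]
    simp [abs_of_pos hα]
    ring
  have h3 : (α * ‖v‖)^2 ≤ ‖q + α • v - y‖^2 :=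
    pow_le_pow_left₀ (by positivity) h2 2
  rw [hexp] at h3
  nlinarith

lemma zero_mem_proxNormalCone {S : Set E} {q : E} (hq : q ∈ S) : (0:E) ∈ proxNormalCone S q :=
  mem_proxNormalCone_of_forall hq one_pos (fun y _ => by simp [sq_nonneg])

lemma proxNormalCone_eq_zero_of_interior {S : Set E} {q v : E} (hq : q ∈ interior S)
    (hv : v ∈ proxNormalCone S q) : v = 0 := by
  by_contra hv0
  obtain ⟨r, hr, hball⟩ := Metric.isOpen_iff.1 isOpen_interior q hq
  obtain ⟨-, α, hα, H⟩ := proxNormalCone_spec hv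
  have hvn : 0 < ‖v‖ := norm_pos_iff.2 hv0
  set s : ℝ := min α (r / (2 * ‖v‖)) with hs
  have hspos : 0 < s := lt_min hα (by positivity)
  have hy : q + s • v ∈ S := by
    apply interior_subset
    apply hball
    rw [mem_ball, dist_eq_norm]
    have h1 : ‖q + s • v - q‖ = s * ‖v‖ := by
      simp [norm_smul, abs_of_pos hspos]
    rw [h1]
    have h2 : s ≤ r / (2 * ‖v‖) := min_le_right _ _
    calc s * ‖v‖ ≤ (r / (2 * ‖v‖)) * ‖v‖ := by nlinarith
    _ < r := by
      have h4 : ‖v‖ / (2 * ‖v‖) = 1/2 := by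
        field_simp
      rw [div_mul_eq_mul_div, mul_div_assoc, h4]
      linarith
  have := H _ hy
  have h3 : q + s • v - q = s • v := by abel
  rw [h3, real_inner_smul_right, norm_smul, Real.norm_eq_abs, abs_of_pos hspos] at this
  have hsa : s ≤ α := min_le_left _ _
  have hip : ⟪v, v⟫ = ‖v‖^2 := real_inner_self_eq_norm_sq v
  rw [hip, mul_pow] at this
  nlinarith [mul_pos hspos (pow_pos hvn 2)]


lemma taylor_bound {f : E → ℝ} {Gf : E → E} {Hf : E → (E →L[ℝ] E)} {x : E} {r M : ℝ}
    (hM : 0 ≤ M)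
    (hgrad : ∀ z ∈ ball x r, HasGradientAt f (Gf z) z)
    (hderiv : ∀ z ∈ ball x r, HasFDerivAt Gf (Hf z) z)
    (hbound : ∀ z ∈ ball x r, ‖Hf z‖ ≤ M)
    {y : E} (hy : y ∈ ball x r) : |f y - f x - ⟪Gf x, y - x⟫| ≤ M * ‖y - x‖^2 := by
  have hr : 0 < r := lt_of_le_of_lt dist_nonneg (mem_ball.1 hy)
  have hx : x ∈ ball x r := mem_ball_self hr
  have hlip : ∀ z ∈ ball x r, ‖Gf z - Gf x‖ ≤ M * ‖z - x‖ := fun z hz =>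
    Convex.norm_image_sub_le_of_norm_hasFDerivWithin_le
      (fun w hw => (hderiv w hw).hasFDerivWithinAt) hbound (convex_ball x r) hx hz
  set u : E := y - x with hu
  have hun : ‖u‖ < r := by rw [hu, ← dist_eq_norm]; exact mem_ball.1 hy
  have hmem : ∀ s ∈ Icc (0:ℝ) 1, x + s • u ∈ ball x r := by
    intro s hs
    rw [mem_ball, dist_eq_norm]
    have : x + s • u - x = s • u := by abel
    rw [this, norm_smul, Real.norm_eq_abs, abs_of_nonneg hs.1]
    calc s * ‖u‖ ≤ 1 * ‖u‖ := by nlinarith [hs.2, norm_nonneg u]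
    _ = ‖u‖ := one_mul _
    _ < r := hun
  set ψ : ℝ → ℝ := fun s => f (x + s • u) - s * ⟪Gf x, u⟫ with hψ
  set ψ' : ℝ → ℝ := fun s => ⟪Gf (x + s • u), u⟫ - ⟪Gf x, u⟫ with hψ'
  have hd : ∀ s ∈ Icc (0:ℝ) 1, HasDerivAt ψ (ψ' s) s := by
    intro s hs
    have hc : HasDerivAt (fun s : ℝ => x + s • u) u s := by
      simpa using ((hasDerivAt_id s).smul_const u).const_add x
    have hf : HasDerivAt (fun s : ℝ => f (x + s • u)) ⟪Gf (x + s • u), u⟫ s := by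
      have h := ((hgrad _ (hmem s hs)).hasFDerivAt).comp_hasDerivAt s hc
      rw [InnerProductSpace.toDual_apply_apply] at h
      exact h
    exact hf.sub (hasDerivAt_mul_const _)
  have hbd : ∀ s ∈ Icc (0:ℝ) 1, ‖ψ' s‖ ≤ M * ‖u‖^2 := by
    intro s hs
    simp only [hψ', Real.norm_eq_abs]
    rw [← inner_sub_left]
    calc |⟪Gf (x + s • u) - Gf x, u⟫| ≤ ‖Gf (x + s • u) - Gf x‖ * ‖u‖ :=
          abs_real_inner_le_norm _ _
    _ ≤ (M * ‖x + s • u - x‖) * ‖u‖ := by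
          have := hlip _ (hmem s hs)
          nlinarith [norm_nonneg u, abs_real_inner_le_norm (Gf (x + s • u) - Gf x) u,
            norm_nonneg (Gf (x + s • u) - Gf x)]
    _ ≤ M * ‖u‖^2 := by
          have h2 : x + s • u - x = s • u := by abel
          rw [h2, norm_smul, Real.norm_eq_abs, abs_of_nonneg hs.1]
          nlinarith [mul_nonneg (mul_nonneg hM (sub_nonneg.2 hs.2)) (sq_nonneg ‖u‖)]
  have key : ‖ψ 1 - ψ 0‖ ≤ M * ‖u‖^2 * ‖(1:ℝ) - 0‖ :=
    Convex.norm_image_sub_le_of_norm_hasDerivWithin_le (𝕜 := ℝ)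
      (fun s hs => (hd s hs).hasDerivWithinAt) hbd (convex_Icc 0 1)
      (by norm_num : (0:ℝ) ∈ Icc (0:ℝ) 1) (by norm_num : (1:ℝ) ∈ Icc (0:ℝ) 1)
  have hx1 : x + (1:ℝ) • u = y := by rw [hu, one_smul]; abel
  have hx0 : x + (0:ℝ) • u = x := by rw [zero_smul, add_zero]
  have h10 : ψ 1 - ψ 0 = f y - f x - ⟪Gf x, u⟫ := by
    simp only [hψ, hx1, hx0, one_mul, zero_mul, sub_zero]
    ring
  rw [h10, Real.norm_eq_abs] at key
  have h11 : ‖(1:ℝ) - 0‖ = 1 := by norm_num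
  rw [h11, mul_one] at key
  exact key

lemma inner_nonpos_of_feasible_dir {S : Set E} {q v u : E} (hv : v ∈ proxNormalCone S q)
    {s₀ : ℝ} (hs₀ : 0 < s₀) (hfeas : ∀ s : ℝ, 0 < s → s ≤ s₀ → q + s • u ∈ S) :
    ⟪v, u⟫ ≤ 0 := by
  obtain ⟨-, α, hα, H⟩ := proxNormalCone_spec hv
  have : ∀ ε : ℝ, 0 < ε → ⟪v, u⟫ ≤ 0 + ε := by
    intro ε hε
    set s : ℝ := min s₀ (2*α*ε/(‖u‖^2+1)) with hs
    have hspos : 0 < s := lt_min hs₀ (by positivity)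
    have h1 := H _ (hfeas s hspos (min_le_left _ _))
    have h2 : q + s • u - q = s • u := by abel
    rw [h2, real_inner_smul_right, norm_smul, Real.norm_eq_abs, abs_of_pos hspos, mul_pow] at h1
    have h3 : s ≤ 2*α*ε/(‖u‖^2+1) := min_le_right _ _
    have h4 : s * (‖u‖^2+1) ≤ 2*α*ε := (le_div_iff₀ (by positivity)).1 h3
    nlinarith [sq_nonneg ‖u‖, mul_pos hα hspos,
      mul_le_mul_of_nonneg_left h4 (le_of_lt hspos)]
  linarith [le_of_forall_pos_le_add this]

lemma farkas_cone {n : Fin p → E} {act : Fin p → Prop} {κ : ℝ} (hκ : 0 ≤ κ)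
    (hbound : ∀ lam : Fin p → ℝ, (∀ i, 0 ≤ lam i) → (∀ i, ¬act i → lam i = 0) →
      ∑ i, lam i ≤ κ * ‖∑ i, lam i • n i‖)
    {v : E} (hv : ∀ u : E, (∀ i, act i → 0 ≤ ⟪n i, u⟫) → ⟪v, u⟫ ≤ 0) :
    ∃ lam : Fin p → ℝ, (∀ i, 0 ≤ lam i) ∧ (∀ i, ¬act i → lam i = 0) ∧
      v = -∑ i, lam i • n i := by
  classical
  set R : ℝ := κ * (2 * ‖v‖) + 1 with hR
  have hRpos : 0 < R := by positivity
  set K : Set (Fin p → ℝ) :=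
    {lam | (∀ i, lam i ∈ Icc (0:ℝ) R) ∧ ∀ i, ¬act i → lam i = 0} with hK
  have hK0 : (fun _ => 0 : Fin p → ℝ) ∈ K :=
    ⟨fun i => ⟨le_refl _, le_of_lt hRpos⟩, fun i _ => rfl⟩
  have hKcl : IsCompact K := by
    have h1 : K = (Set.pi univ fun _ => Icc (0:ℝ) R) ∩
        {lam : Fin p → ℝ | ∀ i, ¬act i → lam i = 0} := by
      ext lam; simp [hK, Set.mem_pi, Pi.le_def]; intro _; exact forall_and
    rw [h1]
    refine (isCompact_univ_pi fun _ => isCompact_Icc).inter_right ?_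
    have h2 : {lam : Fin p → ℝ | ∀ i, ¬act i → lam i = 0} =
        ⋂ i, {lam : Fin p → ℝ | ¬act i → lam i = 0} := by
      ext lam; simp
    rw [h2]
    refine isClosed_iInter fun i => ?_
    by_cases h : act i
    · have : {lam : Fin p → ℝ | ¬act i → lam i = 0} = univ := by
        ext lam; simp [h]
      rw [this]; exact isClosed_univ
    · have : {lam : Fin p → ℝ | ¬act i → lam i = 0} = (fun lam : Fin p → ℝ => lam i) ⁻¹' {0} := by
        ext lam; simp [h]
      rw [this]
      exact isClosed_singleton.preimage (continuous_apply i)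
  set f : (Fin p → ℝ) → ℝ := fun lam => ‖v + ∑ i, lam i • n i‖^2 with hf
  have hfc : Continuous f := by
    apply Continuous.pow
    apply Continuous.norm
    exact continuous_const.add (continuous_finset_sum _ fun i _ =>
      (continuous_apply i).smul continuous_const)
  obtain ⟨lam, hlamK, hmin⟩ := hKcl.exists_isMinOn ⟨_, hK0⟩ hfc.continuousOn
  set w : E := v + ∑ i, lam i • n i with hw
  have hlam0 : ∀ i, 0 ≤ lam i := fun i => (hlamK.1 i).1
  have hlamsupp : ∀ i, ¬act i → lam i = 0 := hlamK.2
  -- the minimizer is interior to the box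
  have hwle : ‖w‖ ≤ ‖v‖ := by
    have h1 : f lam ≤ f (fun _ => 0) := hmin hK0
    have h2 : f (fun _ => 0) = ‖v‖^2 := by simp [hf]
    rw [h2] at h1
    exact sq_le_sq_of_nonneg (norm_nonneg _) (norm_nonneg _) h1
  have hlamlt : ∀ i, lam i < R := by
    have h1 : ∑ i, lam i ≤ κ * ‖∑ i, lam i • n i‖ := hbound lam hlam0 hlamsupp
    have h2 : ‖∑ i, lam i • n i‖ ≤ 2 * ‖v‖ := by
      have : (∑ i, lam i • n i) = w - v := by rw [hw]; abel
      rw [this]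
      calc ‖w - v‖ ≤ ‖w‖ + ‖v‖ := norm_sub_le _ _
      _ ≤ 2 * ‖v‖ := by linarith
    intro i
    have h3 : lam i ≤ ∑ j, lam j :=
      Finset.single_le_sum (fun j _ => hlam0 j) (Finset.mem_univ i)
    have h4 : κ * ‖∑ i, lam i • n i‖ ≤ κ * (2 * ‖v‖) :=
      mul_le_mul_of_nonneg_left h2 hκ
    rw [hR]; linarith
  -- variation computation
  have hvar : ∀ (i : Fin p) (c : ℝ),
      (∑ j, (Function.update lam i c) j • n j) = (∑ j, lam j • n j) + (c - lam i) • n i := by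
    intro i c
    rw [Finset.sum_eq_sum_sdiff_singleton_add (Finset.mem_univ i)
        (fun j => (Function.update lam i c) j • n j),
      Finset.sum_eq_sum_sdiff_singleton_add (Finset.mem_univ i) (fun j => lam j • n j)]
    have h1 : ∑ j ∈ Finset.univ \ {i}, (Function.update lam i c) j • n j
        = ∑ j ∈ Finset.univ \ {i}, lam j • n j := by
      refine Finset.sum_congr rfl fun j hj => ?_
      have : j ≠ i := by
        intro h; rw [h] at hj; simp at hj
      rw [Function.update_of_ne this]
    rw [h1, Function.update_self, sub_smul]
    abel
  have hupdmem : ∀ (i : Fin p) (c : ℝ), act i → c ∈ Icc (0:ℝ) R → Function.update lam i c ∈ K := by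
    intro i c hi hc
    constructor
    · intro j
      by_cases h : j = i
      · subst h; rw [Function.update_self]; exact hc
      · rw [Function.update_of_ne h]; exact hlamK.1 j
    · intro j hj
      have h : j ≠ i := by intro h; subst h; exact hj hi
      rw [Function.update_of_ne h]; exact hlamsupp j hj
  have hfval : ∀ (i : Fin p) (c : ℝ),
      f (Function.update lam i c) = ‖w‖^2 + 2 * (c - lam i) * ⟪w, n i⟫ + (c - lam i)^2 * ‖n i‖^2 := by
    intro i c
    have hx : v + ∑ j, (Function.update lam i c) j • n j = w + (c - lam i) • n i := by
      rw [hvar i c, hw]; abel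
    show ‖v + ∑ j, (Function.update lam i c) j • n j‖^2 = _
    rw [hx, norm_add_sq_real, real_inner_smul_right, norm_smul, Real.norm_eq_abs, mul_pow, sq_abs]
    ring
  -- KKT conditions
  have hup : ∀ i, act i → 0 ≤ ⟪w, n i⟫ := by
    intro i hi
    by_contra hneg
    push_neg at hneg
    set s : ℝ := min (R - lam i) ((-⟪w, n i⟫)/(‖n i‖^2+1)) with hs
    have hspos : 0 < s := lt_min (by linarith [hlamlt i]) (div_pos (by linarith) (by positivity))
    have hc : lam i + s ∈ Icc (0:ℝ) R := by
      constructor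
      · linarith [hlam0 i]
      · have := min_le_left (R - lam i) ((-⟪w, n i⟫)/(‖n i‖^2+1)); linarith
    have h1 : f lam ≤ f (Function.update lam i (lam i + s)) := hmin (hupdmem i _ hi hc)
    rw [hfval] at h1
    have h2 : f lam = ‖w‖^2 := by show ‖v + ∑ i, lam i • n i‖^2 = _; rw [hw]
    rw [h2] at h1
    have h3 : s ≤ (-⟪w, n i⟫)/(‖n i‖^2+1) := min_le_right _ _
    have h4 : s * (‖n i‖^2+1) ≤ -⟪w, n i⟫ := (le_div_iff₀ (by positivity)).1 h3
    simp only [add_sub_cancel_left] at h1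
    nlinarith [sq_nonneg ‖n i‖, mul_pos hspos hspos]
  have hdown : ∀ i, 0 < lam i → ⟪w, n i⟫ ≤ 0 := by
    intro i hi
    by_contra hpos
    push_neg at hpos
    set s : ℝ := min (lam i) (⟪w, n i⟫/(‖n i‖^2+1)) with hs
    have hspos : 0 < s := lt_min hi (div_pos (by linarith) (by positivity))
    have hacti : act i := by
      by_contra h; exact absurd (hlamsupp i h) (ne_of_gt hi)
    have hc : lam i - s ∈ Icc (0:ℝ) R := by
      constructor
      · have := min_le_left (lam i) (⟪w, n i⟫/(‖n i‖^2+1)); linarith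
      · linarith [(hlamK.1 i).2]
    have h1 : f lam ≤ f (Function.update lam i (lam i - s)) := hmin (hupdmem i _ hacti hc)
    rw [hfval] at h1
    have h2 : f lam = ‖w‖^2 := by show ‖v + ∑ i, lam i • n i‖^2 = _; rw [hw]
    rw [h2] at h1
    have h3 : s ≤ ⟪w, n i⟫/(‖n i‖^2+1) := min_le_right _ _
    have h4 : s * (‖n i‖^2+1) ≤ ⟪w, n i⟫ := (le_div_iff₀ (by positivity)).1 h3
    have h5 : lam i - s - lam i = -s := by ring
    rw [h5] at h1
    nlinarith [sq_nonneg ‖n i‖, mul_pos hspos hspos]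
  -- conclude w = 0
  have hcomp : ⟪∑ i, lam i • n i, w⟫ = 0 := by
    rw [sum_inner]
    refine Finset.sum_eq_zero fun i _ => ?_
    rw [real_inner_smul_left]
    rcases eq_or_lt_of_le (hlam0 i) with h | h
    · rw [← h]; ring
    · have hacti : act i := by
        by_contra hni; exact absurd (hlamsupp i hni) (ne_of_gt h)
      have := le_antisymm (hdown i h) (hup i hacti)
      rw [real_inner_comm, this, mul_zero]
  have hvw : ⟪v, w⟫ ≤ 0 := by
    refine hv w fun i hi => ?_
    rw [real_inner_comm]; exact hup i hi
  have hww : ⟪w, w⟫ ≤ 0 := by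
    have : w = v + ∑ i, lam i • n i := hw
    calc ⟪w, w⟫ = ⟪v, w⟫ + ⟪∑ i, lam i • n i, w⟫ := by
          rw [hw, inner_add_left]
    _ ≤ 0 := by rw [hcomp]; linarith
  have hw0 : w = 0 := by
    have := real_inner_self_eq_norm_sq w
    have h0 : ‖w‖^2 ≤ 0 := by rw [← this]; exact hww
    have := norm_nonneg w
    have : ‖w‖ = 0 := by nlinarith
    exact norm_eq_zero.1 this
  refine ⟨lam, hlam0, hlamsupp, ?_⟩
  have : v + ∑ i, lam i • n i = 0 := by rw [← hw, hw0]
  linear_combination (norm := module) this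

lemma mem_proxNormalCone_of_local {S : Set E} {q v : E} (hq : q ∈ S) {C r : ℝ}
    (hC : 0 ≤ C) (hr : 0 < r)
    (H : ∀ y ∈ S, y ∈ ball q r → ⟪v, y - q⟫ ≤ C * ‖y - q‖^2) :
    v ∈ proxNormalCone S q := by
  set α : ℝ := min (1/(2*(C+1))) (r/(2*(‖v‖+1))) with hα
  have hαpos : 0 < α := lt_min (by positivity) (by positivity)
  refine mem_proxNormalCone_of_forall hq hαpos ?_
  intro y hy
  by_cases hby : y ∈ ball q r
  · have h1 := H y hy hby
    have h2 : α ≤ 1/(2*(C+1)) := min_le_left _ _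
    have h3 : α * (2*(C+1)) ≤ 1 := by
      rw [div_eq_mul_inv, one_mul] at h2
      calc α * (2*(C+1)) ≤ (2*(C+1))⁻¹ * (2*(C+1)) := by nlinarith
      _ = 1 := inv_mul_cancel₀ (by positivity)
    nlinarith [sq_nonneg ‖y - q‖, mul_le_mul_of_nonneg_left h1 (le_of_lt hαpos)]
  · have h1 : r ≤ ‖y - q‖ := by
      rw [← dist_eq_norm]
      exact not_lt.1 (fun h => hby (mem_ball.2 h))
    have h2 : α ≤ r/(2*(‖v‖+1)) := min_le_right _ _
    have h3 : α * (2*(‖v‖+1)) ≤ r := (le_div_iff₀ (by positivity)).1 h2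
    have h4 : ⟪v, y - q⟫ ≤ ‖v‖ * ‖y - q‖ := real_inner_le_norm _ _
    nlinarith [norm_nonneg v, norm_nonneg (y - q),
      mul_le_mul_of_nonneg_right h3 (le_trans (le_of_lt hr) h1)]

lemma nonneg_of_quad {A B s₀ : ℝ} (hs₀ : 0 < s₀)
    (h : ∀ s : ℝ, 0 < s → s ≤ s₀ → 0 ≤ 2*s*A + s^2*B) : 0 ≤ A := by
  by_contra h'
  push_neg at h'
  set s : ℝ := min s₀ ((-A)/(|B|+1)) with hs
  have hspos : 0 < s := lt_min hs₀ (div_pos (by linarith) (by positivity))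
  have h1 := h s hspos (min_le_left _ _)
  have h2 : s ≤ (-A)/(|B|+1) := min_le_right _ _
  have h3 : s * (|B|+1) ≤ -A := (le_div_iff₀ (by positivity)).1 h2
  nlinarith [le_abs_self B, abs_nonneg B, mul_pos hspos hspos]

lemma exists_pos_dir {n : Fin p → E} {act : Fin p → Prop} {κ : ℝ}
    (hbound : ∀ lam : Fin p → ℝ, (∀ i, 0 ≤ lam i) → (∀ i, ¬act i → lam i = 0) →
      ∑ i, lam i ≤ κ * ‖∑ i, lam i • n i‖)
    (hex : ∃ i, act i) :
    ∃ c : E, c ≠ 0 ∧ ∀ i, act i → ‖c‖^2 ≤ ⟪n i, c⟫ := by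
  classical
  obtain ⟨i₀, hi₀⟩ := hex
  set K : Set (Fin p → ℝ) :=
    {lam | (∀ i, lam i ∈ Icc (0:ℝ) 1) ∧ (∀ i, ¬act i → lam i = 0) ∧ ∑ i, lam i = 1} with hK
  have hK0 : (fun j => if j = i₀ then (1:ℝ) else 0) ∈ K := by
    refine ⟨fun i => ?_, fun i hi => ?_, ?_⟩
    · by_cases h : i = i₀ <;> simp [h]
    · have : i ≠ i₀ := fun h => hi (h ▸ hi₀)
      simp [this]
    · simp
  have hKcl : IsCompact K := by
    have h1 : K = ((Set.pi univ fun _ => Icc (0:ℝ) 1) ∩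
        {lam : Fin p → ℝ | ∀ i, ¬act i → lam i = 0}) ∩
        {lam : Fin p → ℝ | ∑ i, lam i = 1} := by
      ext lam
      simp only [hK, mem_setOf_eq, mem_inter_iff, Set.mem_pi, mem_univ, forall_const]
      tauto
    rw [h1]
    have hcl1 : IsClosed {lam : Fin p → ℝ | ∀ i, ¬act i → lam i = 0} := by
      have h2 : {lam : Fin p → ℝ | ∀ i, ¬act i → lam i = 0} =
          ⋂ i, {lam : Fin p → ℝ | ¬act i → lam i = 0} := by ext lam; simp
      rw [h2]
      refine isClosed_iInter fun i => ?_
      by_cases h : act i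
      · have : {lam : Fin p → ℝ | ¬act i → lam i = 0} = univ := by ext lam; simp [h]
        rw [this]; exact isClosed_univ
      · have : {lam : Fin p → ℝ | ¬act i → lam i = 0} =
            (fun lam : Fin p → ℝ => lam i) ⁻¹' {0} := by ext lam; simp [h]
        rw [this]; exact isClosed_singleton.preimage (continuous_apply i)
    have hcl2 : IsClosed {lam : Fin p → ℝ | ∑ i, lam i = 1} :=
      isClosed_singleton.preimage (continuous_finset_sum _ fun i _ => continuous_apply i)
    exact (((isCompact_univ_pi fun _ => isCompact_Icc).inter_right hcl1).inter_right hcl2)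
  set f : (Fin p → ℝ) → ℝ := fun lam => ‖∑ i, lam i • n i‖^2 with hf
  have hfc : Continuous f :=
    ((continuous_finset_sum _ fun i _ => (continuous_apply i).smul continuous_const).norm).pow 2
  obtain ⟨μ, hμK, hmin⟩ := hKcl.exists_isMinOn ⟨_, hK0⟩ hfc.continuousOn
  set c : E := ∑ i, μ i • n i with hc
  have hμbound : ∑ i, μ i ≤ κ * ‖c‖ := hbound μ (fun i => (hμK.1 i).1) hμK.2.1
  have hcne : c ≠ 0 := by
    intro h0
    rw [h0, norm_zero, mul_zero, hμK.2.2] at hμbound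
    linarith
  refine ⟨c, hcne, fun i hi => ?_⟩
  have hmemK : ∀ s : ℝ, s ∈ Icc (0:ℝ) 1 →
      (fun j => (1-s) * μ j + s * (if j = i then 1 else 0)) ∈ K := by
    intro s hs
    refine ⟨fun j => ?_, fun j hj => ?_, ?_⟩
    · show ((1-s) * μ j + s * (if j = i then 1 else 0)) ∈ Icc (0:ℝ) 1
      by_cases h : j = i
      · rw [if_pos h]
        constructor <;> nlinarith [hs.1, hs.2, (hμK.1 j).1, (hμK.1 j).2]
      · rw [if_neg h]
        constructor <;> nlinarith [hs.1, hs.2, (hμK.1 j).1, (hμK.1 j).2]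
    · show (1-s) * μ j + s * (if j = i then (1:ℝ) else 0) = 0
      have hji : j ≠ i := fun h => hj (h ▸ hi)
      rw [hμK.2.1 j hj, if_neg hji]
      ring
    · show (∑ j, ((1-s) * μ j + s * (if j = i then (1:ℝ) else 0))) = 1
      rw [Finset.sum_add_distrib, ← Finset.mul_sum, ← Finset.mul_sum, hμK.2.2,
        Finset.sum_ite_eq' Finset.univ i (fun _ => (1:ℝ))]
      simp
  have hsum : ∀ s : ℝ, (∑ j, ((1-s) * μ j + s * (if j = i then 1 else 0)) • n j)
      = c + s • (n i - c) := by
    intro s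
    have h1 : ∀ j, ((1-s) * μ j + s * (if j = i then 1 else 0)) • n j
        = (1-s) • (μ j • n j) + s • ((if j = i then (1:ℝ) else 0) • n j) := by
      intro j
      rw [add_smul, mul_smul, mul_smul]
    simp only [h1]
    rw [Finset.sum_add_distrib, ← Finset.smul_sum, ← Finset.smul_sum, ← hc]
    have h2 : (∑ j, (if j = i then (1:ℝ) else 0) • n j) = n i := by
      simp only [ite_smul, one_smul, zero_smul, Finset.sum_ite_eq', Finset.mem_univ, if_true]
    rw [h2, sub_smul, one_smul, smul_sub]
    abel
  have hquad : ∀ s : ℝ, 0 < s → s ≤ 1 → 0 ≤ 2*s*⟪c, n i - c⟫ + s^2*‖n i - c‖^2 := by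
    intro s hs0 hs1
    have h1 : f μ ≤ f (fun j => (1-s) * μ j + s * (if j = i then 1 else 0)) :=
      hmin (hmemK s ⟨le_of_lt hs0, hs1⟩)
    have h2 : f (fun j => (1-s) * μ j + s * (if j = i then 1 else 0))
        = ‖c + s • (n i - c)‖^2 := by
      show ‖∑ j, ((1-s) * μ j + s * (if j = i then 1 else 0)) • n j‖^2 = _
      rw [hsum s]
    have h3 : f μ = ‖c‖^2 := by show ‖∑ j, μ j • n j‖^2 = _; rw [← hc]
    rw [h2, h3] at h1
    rw [norm_add_sq_real, real_inner_smul_right, norm_smul, Real.norm_eq_abs,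
      abs_of_pos hs0, mul_pow] at h1
    nlinarith
  have h4 : 0 ≤ ⟪c, n i - c⟫ := nonneg_of_quad one_pos hquad
  rw [inner_sub_right, real_inner_self_eq_norm_sq] at h4
  rw [real_inner_comm]
  linarith

set_option maxHeartbeats 1000000

/-- for every `t ∈ [0,T]` and `q ∈ Q(t)`, the proximal normal cone to
`Q(t)` at `q` decomposes as `N(Q(t),q) = Σᵢ N(Qᵢ(t),q) = -Σ_{i ∈ I(t,q)} ℝ⁺ ∇gᵢ(t,q)`,
where `I(t,q)` is the active set. -/
theorem proximal_normal_cone_decomposition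
    (T : ℝ) (hT : 0 < T) (hd : 1 ≤ d) (hp : 1 ≤ p)
    (g : Fin p → ℝ → E → ℝ)
    (G : Fin p → ℝ → E → E)            -- spatial gradients ∇_q gᵢ
    (Hess : Fin p → ℝ → E → (E →L[ℝ] E))  -- spatial Hessians D²_q gᵢ
    (U : Fin p → ℝ → Set E)
    (a b M ga : ℝ)
    -- gᵢ convex in the second variable, Q(t) nonempty
    (hconv : ∀ i, ∀ t ∈ Icc (0:ℝ) T, ConvexOn ℝ univ (g i t))
    (hQne : ∀ t ∈ Icc (0:ℝ) T, (Qset g t).Nonempty)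
    -- Uᵢ(t) open with Qᵢ(t) ⊆ Uᵢ(t)
    (hUopen : ∀ i, ∀ t ∈ Icc (0:ℝ) T, IsOpen (U i t))
    (hQU : ∀ i, ∀ t ∈ Icc (0:ℝ) T, {q : E | 0 ≤ g i t q} ⊆ U i t)
    -- gᵢ(t,·) ∈ C²(Uᵢ(t)) with gradient G and Hessian Hess
    (hgrad : ∀ i, ∀ t ∈ Icc (0:ℝ) T, ∀ q ∈ U i t, HasGradientAt (g i t) (G i t q) q)
    (hhess : ∀ i, ∀ t ∈ Icc (0:ℝ) T, ∀ q ∈ U i t, HasFDerivAt (G i t) (Hess i t q) q)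
    (hhesscont : ∀ i, ∀ t ∈ Icc (0:ℝ) T, ContinuousOn (Hess i t) (U i t))
    -- (A1)
    (ha : 0 < a) (hb : 0 < b) (hM : 0 < M)
    (hA1 : ∀ i, ∀ t ∈ Icc (0:ℝ) T, ∀ q ∈ U i t, a ≤ ‖G i t q‖ ∧ ‖G i t q‖ ≤ b)
    -- (A4)
    (hA4 : ∀ i, ∀ t ∈ Icc (0:ℝ) T, ∀ q ∈ U i t, ‖Hess i t q‖ ≤ M)
    -- (A5')
    (hga : 1 ≤ ga)
    (hA5' : ∀ t ∈ Icc (0:ℝ) T, ∀ q ∈ Qset g t, ∀ lam : Fin p → ℝ, (∀ i, 0 ≤ lam i) →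
      ∑ i, (if g i t q = 0 then lam i * ‖G i t q‖ else 0) ≤
        ga * ‖∑ i, (if g i t q = 0 then lam i • G i t q else (0:E))‖)
    : ∀ t ∈ Icc (0:ℝ) T, ∀ q ∈ Qset g t,
      proxNormalCone (Qset g t) q =
        {x : E | ∃ v : Fin p → E,
          (∀ i, v i ∈ proxNormalCone {y : E | 0 ≤ g i t y} q) ∧ x = ∑ i, v i} ∧
      proxNormalCone (Qset g t) q =
        {x : E | ∃ lam : Fin p → ℝ, (∀ i, 0 ≤ lam i) ∧ (∀ i, g i t q ≠ 0 → lam i = 0) ∧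
          x = -∑ i, lam i • G i t q} := by
  intro t ht q hq
  classical
  have hqU : ∀ i, q ∈ U i t := fun i => hQU i t ht (hq i)
  have hopen : IsOpen (⋂ i, U i t) := isOpen_iInter_of_finite fun i => hUopen i t ht
  obtain ⟨r0, hr0, hball⟩ := Metric.isOpen_iff.1 hopen q (mem_iInter.2 hqU)
  have hballU : ∀ i, ball q r0 ⊆ U i t := fun i => hball.trans (iInter_subset _ i)
  -- Taylor estimates
  have TAY : ∀ i, ∀ y ∈ ball q r0, |g i t y - g i t q - ⟪G i t q, y - q⟫| ≤ M * ‖y - q‖^2 :=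
    fun i y hy => taylor_bound (le_of_lt hM)
      (fun z hz => hgrad i t ht z (hballU i hz))
      (fun z hz => hhess i t ht z (hballU i hz))
      (fun z hz => hA4 i t ht z (hballU i hz)) hy
  have key1 : ∀ i, g i t q = 0 → ∀ y : E, 0 ≤ g i t y → y ∈ ball q r0 →
      -(M * ‖y - q‖^2) ≤ ⟪G i t q, y - q⟫ := by
    intro i hi y hy hby
    have h1 := (abs_le.1 (TAY i y hby)).2
    rw [hi] at h1
    linarith
  have key2 : ∀ i, ∀ y ∈ ball q r0,
      g i t q + ⟪G i t q, y - q⟫ - M * ‖y - q‖^2 ≤ g i t y := by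
    intro i y hby
    have h1 := (abs_le.1 (TAY i y hby)).1
    linarith
  -- the coercivity bound coming from (A5')
  have hbound : ∀ lam : Fin p → ℝ, (∀ i, 0 ≤ lam i) → (∀ i, ¬(g i t q = 0) → lam i = 0) →
      ∑ i, lam i ≤ (ga/a) * ‖∑ i, lam i • G i t q‖ := by
    intro lam h0 hsupp
    have e1 : ∀ i, (if g i t q = 0 then lam i • G i t q else (0:E)) = lam i • G i t q := by
      intro i
      by_cases h : g i t q = 0
      · rw [if_pos h]
      · rw [if_neg h, hsupp i h, zero_smul]
    have e2 : ∀ i, (if g i t q = 0 then lam i * ‖G i t q‖ else 0) = lam i * ‖G i t q‖ := by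
      intro i
      by_cases h : g i t q = 0
      · rw [if_pos h]
      · rw [if_neg h, hsupp i h, zero_mul]
    have c2 : ∑ i, lam i * ‖G i t q‖ ≤ ga * ‖∑ i, lam i • G i t q‖ := by
      have h5 := hA5' t ht q hq lam h0
      rw [Finset.sum_congr rfl (fun i _ => e2 i), Finset.sum_congr rfl (fun i _ => e1 i)] at h5
      exact h5
    have c1 : a * ∑ i, lam i ≤ ∑ i, lam i * ‖G i t q‖ := by
      rw [Finset.mul_sum]
      refine Finset.sum_le_sum fun i _ => ?_
      have h6 := (hA1 i t ht q (hqU i)).1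
      nlinarith [h0 i]
    rw [div_mul_eq_mul_div, le_div_iff₀ ha, mul_comm]
    linarith
  -- strictly feasible directions give feasible points (per constraint)
  have hper : ∀ (i : Fin p) (u' : E), (g i t q = 0 → 0 < ⟪G i t q, u'⟫) →
      ∃ s₁ > 0, ∀ s : ℝ, 0 < s → s ≤ s₁ → 0 ≤ g i t (q + s • u') := by
    intro i u' hstrict
    by_cases hact : g i t q = 0
    · have hA : 0 < ⟪G i t q, u'⟫ := hstrict hact
      refine ⟨min (r0/(2*(‖u'‖+1))) (⟪G i t q, u'⟫/(M*‖u'‖^2+1)),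
        lt_min (by positivity) (div_pos hA (by positivity)), ?_⟩
      intro s hs0 hs1
      have hsr : s * (2*(‖u'‖+1)) ≤ r0 :=
        (le_div_iff₀ (by positivity)).1 (le_trans hs1 (min_le_left _ _))
      have hsA : s * (M*‖u'‖^2+1) ≤ ⟪G i t q, u'⟫ :=
        (le_div_iff₀ (by positivity)).1 (le_trans hs1 (min_le_right _ _))
      have hymem : q + s • u' ∈ ball q r0 := by
        rw [mem_ball, dist_eq_norm]
        have h1 : q + s • u' - q = s • u' := by abel
        rw [h1, norm_smul, Real.norm_eq_abs, abs_of_pos hs0]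
        nlinarith [norm_nonneg u']
      have hk := key2 i _ hymem
      have h1 : q + s • u' - q = s • u' := by abel
      rw [h1, real_inner_smul_right, norm_smul, Real.norm_eq_abs, abs_of_pos hs0, mul_pow,
        hact] at hk
      nlinarith [mul_pos hs0 hs0, sq_nonneg ‖u'‖]
    · have hgpos : 0 < g i t q := lt_of_le_of_ne (hq i) (Ne.symm hact)
      have hcont : ContinuousAt (fun s : ℝ => g i t (q + s • u')) 0 := by
        have h1 : ContinuousAt (fun s : ℝ => q + s • u') 0 :=
          (continuous_const.add (continuous_id.smul continuous_const)).continuousAt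
        have h2 : ContinuousAt (g i t) (q + (0:ℝ) • u') := by
          rw [zero_smul, add_zero]
          exact ((hgrad i t ht q (hqU i)).hasFDerivAt).continuousAt
        exact ContinuousAt.comp (f := fun s : ℝ => q + s • u') (x := (0:ℝ)) h2 h1
      have hgpos' : 0 < g i t (q + (0:ℝ) • u') := by rw [zero_smul, add_zero]; exact hgpos
      have h3 : ∀ᶠ s : ℝ in nhds 0, 0 < g i t (q + s • u') :=
        hcont.eventually (eventually_gt_nhds hgpos')
      rw [Metric.eventually_nhds_iff] at h3
      obtain ⟨δ, hδ, hδs⟩ := h3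
      refine ⟨δ/2, by linarith, fun s hs0 hs1 => le_of_lt (hδs ?_)⟩
      rw [Real.dist_eq, sub_zero, abs_of_pos hs0]
      linarith
  have hfeas : ∀ u' : E, (∀ i, g i t q = 0 → 0 < ⟪G i t q, u'⟫) →
      ∃ s₀ > 0, ∀ s : ℝ, 0 < s → s ≤ s₀ → q + s • u' ∈ Qset g t := by
    intro u' hstrict
    choose s₁ hs₁pos hs₁ using fun i => hper i u' (hstrict i)
    haveI : Nonempty (Fin p) := ⟨⟨0, hp⟩⟩
    refine ⟨Finset.univ.inf' Finset.univ_nonempty s₁, ?_, ?_⟩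
    · exact (Finset.lt_inf'_iff _).2 fun i _ => hs₁pos i
    · intro s hs0 hs1 i
      exact hs₁ i s hs0 (le_trans hs1 (Finset.inf'_le _ (Finset.mem_univ i)))
  -- proximal normals are in the dual of the feasible cone
  have hdual : ∀ v ∈ proxNormalCone (Qset g t) q, ∀ u : E,
      (∀ i, g i t q = 0 → 0 ≤ ⟪G i t q, u⟫) → ⟪v, u⟫ ≤ 0 := by
    intro v hv u hu
    by_cases hex : ∃ i, g i t q = 0
    · obtain ⟨c, hc0, hcpos⟩ := exists_pos_dir (n := fun i => G i t q)
        (act := fun i => g i t q = 0) hbound hex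
      have hcn : 0 < ‖c‖ := norm_pos_iff.2 hc0
      have hstep : ∀ ε : ℝ, 0 < ε → ⟪v, u⟫ ≤ 0 + ε := by
        intro ε hε
        set ε₁ : ℝ := ε/(‖v‖*‖c‖+1) with hε₁
        have hε₁pos : 0 < ε₁ := div_pos hε (by positivity)
        set u' : E := u + ε₁ • c with hu'
        have hstrict : ∀ i, g i t q = 0 → 0 < ⟪G i t q, u'⟫ := by
          intro i hi
          rw [hu', inner_add_right, real_inner_smul_right]
          have h1 : ‖c‖^2 ≤ ⟪G i t q, c⟫ := hcpos i hi
          have h2 := hu i hi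
          nlinarith [pow_pos hcn 2]
        obtain ⟨s₀, hs₀, hfe⟩ := hfeas u' hstrict
        have hle := inner_nonpos_of_feasible_dir hv hs₀ hfe
        rw [hu', inner_add_right, real_inner_smul_right] at hle
        have h4 : |⟪v, c⟫| ≤ ‖v‖*‖c‖ := abs_real_inner_le_norm v c
        have h5 : ε₁ * (‖v‖*‖c‖+1) = ε := by
          rw [hε₁, div_mul_cancel₀]
          positivity
        nlinarith [neg_abs_le (⟪v, c⟫), hε₁pos]
      linarith [le_of_forall_pos_le_add hstep]
    · push_neg at hex
      have hstrict : ∀ i, g i t q = 0 → 0 < ⟪G i t q, u⟫ := fun i hi => absurd hi (hex i)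
      obtain ⟨s₀, hs₀, hfe⟩ := hfeas u hstrict
      exact inner_nonpos_of_feasible_dir hv hs₀ hfe
  -- same for a single constraint
  have hdual1 : ∀ i, g i t q = 0 → ∀ v ∈ proxNormalCone {y : E | 0 ≤ g i t y} q, ∀ u : E,
      0 ≤ ⟪G i t q, u⟫ → ⟪v, u⟫ ≤ 0 := by
    intro i hacti v hv u hu
    have hna : 0 < ‖G i t q‖ := lt_of_lt_of_le ha (hA1 i t ht q (hqU i)).1
    have hstep : ∀ ε : ℝ, 0 < ε → ⟪v, u⟫ ≤ 0 + ε := by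
      intro ε hε
      set ε₁ : ℝ := ε/(‖v‖*‖G i t q‖+1) with hε₁
      have hε₁pos : 0 < ε₁ := div_pos hε (by positivity)
      set u' : E := u + ε₁ • G i t q with hu'
      have hstrict : 0 < ⟪G i t q, u'⟫ := by
        rw [hu', inner_add_right, real_inner_smul_right, real_inner_self_eq_norm_sq]
        nlinarith [sq_nonneg ‖G i t q‖, pow_pos hna 2]
      obtain ⟨s₁, hs₁pos, hs₁⟩ := hper i u' (fun _ => hstrict)
      have hle := inner_nonpos_of_feasible_dir hv hs₁pos
        (fun s h1 h2 => hs₁ s h1 h2)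
      rw [hu', inner_add_right, real_inner_smul_right] at hle
      have h4 : |⟪v, G i t q⟫| ≤ ‖v‖*‖G i t q‖ := abs_real_inner_le_norm v _
      have h5 : ε₁ * (‖v‖*‖G i t q‖+1) = ε := by
        rw [hε₁, div_mul_cancel₀]
        positivity
      nlinarith [neg_abs_le (⟪v, G i t q⟫), hε₁pos]
    linarith [le_of_forall_pos_le_add hstep]
  -- the gradient description of the cone
  have eq2 : proxNormalCone (Qset g t) q =
      {x : E | ∃ lam : Fin p → ℝ, (∀ i, 0 ≤ lam i) ∧ (∀ i, g i t q ≠ 0 → lam i = 0) ∧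
        x = -∑ i, lam i • G i t q} := by
    apply Subset.antisymm
    · intro v hv
      obtain ⟨lam, h0, hsupp, hveq⟩ := farkas_cone (n := fun i => G i t q)
        (act := fun i => g i t q = 0)
        (div_nonneg (le_trans zero_le_one hga) (le_of_lt ha)) hbound
        (fun u hu => hdual v hv u hu)
      exact ⟨lam, h0, hsupp, hveq⟩
    · rintro x ⟨lam, h0, hsupp, rfl⟩
      have hC : 0 ≤ M * ∑ i, lam i :=
        mul_nonneg (le_of_lt hM) (Finset.sum_nonneg fun i _ => h0 i)
      refine mem_proxNormalCone_of_local hq hC hr0 ?_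
      intro y hy hby
      have hterm : ∀ i ∈ Finset.univ, -(lam i * ⟪G i t q, y - q⟫) ≤ lam i * (M * ‖y - q‖^2) := by
        intro i _
        by_cases hz : lam i = 0
        · rw [hz]; simp
        · have hacti : g i t q = 0 := by
            by_contra h; exact hz (hsupp i h)
          have hk := key1 i hacti y (hy i) hby
          nlinarith [mul_le_mul_of_nonneg_left hk (h0 i)]
      rw [inner_neg_left, sum_inner,
        Finset.sum_congr rfl (fun i _ => real_inner_smul_left (G i t q) (y - q) (lam i))]
      calc -(∑ i, lam i * ⟪G i t q, y - q⟫) = ∑ i, -(lam i * ⟪G i t q, y - q⟫) :=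
            (Finset.sum_neg_distrib _).symm
      _ ≤ ∑ i, lam i * (M * ‖y - q‖^2) := Finset.sum_le_sum hterm
      _ = (M * ∑ i, lam i) * ‖y - q‖^2 := by
            rw [mul_comm M (∑ i, lam i), mul_assoc, Finset.sum_mul]
  have eq1 : proxNormalCone (Qset g t) q =
      {x : E | ∃ v : Fin p → E,
        (∀ i, v i ∈ proxNormalCone {y : E | 0 ≤ g i t y} q) ∧ x = ∑ i, v i} := by
    rw [eq2]
    apply Subset.antisymm
    · rintro x ⟨lam, h0, hsupp, rfl⟩
      refine ⟨fun i => -(lam i • G i t q), fun i => ?_, (Finset.sum_neg_distrib _).symm⟩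
      show -(lam i • G i t q) ∈ proxNormalCone {y : E | 0 ≤ g i t y} q
      by_cases hz : lam i = 0
      · rw [hz, zero_smul, neg_zero]
        exact zero_mem_proxNormalCone (hq i)
      · have hacti : g i t q = 0 := by
          by_contra h; exact hz (hsupp i h)
        refine mem_proxNormalCone_of_local (show q ∈ {y : E | 0 ≤ g i t y} from hq i)
          (C := lam i * M) (mul_nonneg (h0 i) (le_of_lt hM)) hr0 ?_
        intro y hy hby
        rw [inner_neg_left, real_inner_smul_left]
        have hk := key1 i hacti y hy hby
        nlinarith [mul_le_mul_of_nonneg_left hk (h0 i)]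
    · rintro x ⟨v, hvmem, rfl⟩
      have hrep : ∀ i, ∃ ci : ℝ, 0 ≤ ci ∧ (g i t q ≠ 0 → ci = 0) ∧ v i = -(ci • G i t q) := by
        intro i
        by_cases hacti : g i t q = 0
        · have hbound1 : ∀ lam : Fin p → ℝ, (∀ j, 0 ≤ lam j) → (∀ j, ¬(j = i) → lam j = 0) →
              ∑ j, lam j ≤ (1/a) * ‖∑ j, lam j • G j t q‖ := by
            intro lam h0 hsupp
            have hs1 : ∑ j, lam j = lam i :=
              Finset.sum_eq_single i (fun j _ hj => hsupp j hj) (by simp)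
            have hs2 : ∑ j, lam j • G j t q = lam i • G i t q :=
              Finset.sum_eq_single i (fun j _ hj => by rw [hsupp j hj, zero_smul]) (by simp)
            rw [hs1, hs2, norm_smul, Real.norm_eq_abs, abs_of_nonneg (h0 i), one_div,
              inv_mul_eq_div, le_div_iff₀ ha]
            have h6 := (hA1 i t ht q (hqU i)).1
            nlinarith [h0 i]
          obtain ⟨lam, h0, hsupp, hveq⟩ := farkas_cone (n := fun j => G j t q)
            (act := fun j => j = i) (by positivity) hbound1
            (fun u hu => hdual1 i hacti (v i) (hvmem i) u (hu i rfl))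
          refine ⟨lam i, h0 i, fun h => absurd hacti h, ?_⟩
          rw [hveq]
          congr 1
          exact Finset.sum_eq_single i (fun j _ hj => by rw [hsupp j hj, zero_smul]) (by simp)
        · have hvi0 : v i = 0 := by
            apply proxNormalCone_eq_zero_of_interior _ (hvmem i)
            have hgpos : 0 < g i t q := lt_of_le_of_ne (hq i) (Ne.symm hacti)
            have hcont : ContinuousOn (g i t) (ball q r0) := fun z hz =>
              ((hgrad i t ht z (hballU i hz)).hasFDerivAt).continuousAt.continuousWithinAt
            have hGopen : IsOpen (ball q r0 ∩ (g i t) ⁻¹' (Ioi 0)) :=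
              hcont.isOpen_inter_preimage isOpen_ball isOpen_Ioi
            refine mem_interior.2 ⟨ball q r0 ∩ (g i t) ⁻¹' (Ioi 0), ?_, hGopen,
              ⟨mem_ball_self hr0, hgpos⟩⟩
            exact fun y hy => show 0 ≤ g i t y from le_of_lt hy.2
          exact ⟨0, le_refl 0, fun _ => rfl, by rw [hvi0, zero_smul, neg_zero]⟩
      choose ci h1 h2 h3 using hrep
      refine ⟨ci, h1, h2, ?_⟩
      rw [Finset.sum_congr rfl (fun i _ => h3 i), Finset.sum_neg_distrib]
  exact ⟨eq1, eq2⟩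
end
end

section
/- Let Qc_i(t, q̃) := {q̂ ∈ ℝ^d : g_i(t, q̃) + ⟨∇_q g_i(t, q̃), q̂ − q̃⟩ ≥ 0}. Under assumptions (A1) and (A4), for all t ∈ [0,T], all q ∈ Q(t), all q̃ ∈ U(t) (with the segment [q̃, q] contained in U_i(t)) and all i ∈ {1,…,p}, the distance from q to the linearized constraint set satisfies the quadratic bound d_{Qc_i(t,q̃)}(q) ≤ (M/(2α)) |q − q̃|². -/
open Set Metric
open Classical

noncomputable section

variable {d p : ℕ}

local notation "E" => EuclideanSpace ℝ (Fin d)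

/-- The linearized (half-space) constraint set
`Qcᵢ(t,q) = {q' | gᵢ(t,q) + ⟨∇gᵢ(t,q), q' - q⟩ ≥ 0}`. -/
def Qci (g : Fin p → ℝ → E → ℝ) (G : Fin p → ℝ → E → E)
    (i : Fin p) (t : ℝ) (q : E) : Set E :=
  {q' | 0 ≤ g i t q + (inner ℝ (G i t q) (q' - q) : ℝ)}

/-- The inner convex approximation `Qc(t,q) = ∩ᵢ Qcᵢ(t,q)`. -/
def Qc (g : Fin p → ℝ → E → ℝ) (G : Fin p → ℝ → E → E) (t : ℝ) (q : E) : Set E :=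
  ⋂ i, Qci g G i t q

/-- Second-order Taylor upper bound along a segment with Hessian bounded by `M`. -/
lemma taylor_upper {g : EuclideanSpace ℝ (Fin d) → ℝ}
    {G : EuclideanSpace ℝ (Fin d) → EuclideanSpace ℝ (Fin d)}
    {Hess : EuclideanSpace ℝ (Fin d) → (EuclideanSpace ℝ (Fin d) →L[ℝ] EuclideanSpace ℝ (Fin d))}
    {x y : EuclideanSpace ℝ (Fin d)} {M : ℝ}
    (hgrad : ∀ z ∈ segment ℝ x y, HasGradientAt g (G z) z)
    (hhess : ∀ z ∈ segment ℝ x y, HasFDerivAt G (Hess z) z)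
    (hbound : ∀ z ∈ segment ℝ x y, ‖Hess z‖ ≤ M) :
    g y ≤ g x + (inner ℝ (G x) (y - x) : ℝ) + M / 2 * ‖y - x‖ ^ 2 := by
  set v := y - x with hv
  have hseg : ∀ s ∈ Icc (0:ℝ) 1, x + s • v ∈ segment ℝ x y := by
    intro s hs
    rw [segment_eq_image']
    exact ⟨s, hs, rfl⟩
  have hLip : ∀ z ∈ segment ℝ x y, ‖G z - G x‖ ≤ M * ‖z - x‖ := by
    intro z hz
    exact Convex.norm_image_sub_le_of_norm_hasFDerivWithin_le
      (fun w hw => (hhess w hw).hasFDerivWithinAt) hbound (convex_segment x y)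
      (left_mem_segment ℝ x y) hz
  set φ : ℝ → ℝ := fun s => g (x + s • v) with hφdef
  have hc : ∀ s : ℝ, HasDerivAt (fun u : ℝ => x + u • v) v s := fun s => by
    simpa using ((hasDerivAt_id s).smul_const v).const_add x
  have hφ' : ∀ s ∈ Icc (0:ℝ) 1,
      HasDerivAt φ (inner ℝ (G (x + s • v)) v : ℝ) s := by
    intro s hs
    have hg := (hgrad _ (hseg s hs)).hasFDerivAt
    have := hg.comp_hasDerivAt s (hc s)
    exact this
  set ψ : ℝ → ℝ := fun s =>
    g x + s * (inner ℝ (G x) v : ℝ) + M / 2 * ‖v‖ ^ 2 * s ^ 2 - φ s with hψdef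
  have hψ' : ∀ s ∈ Icc (0:ℝ) 1, HasDerivAt ψ
      ((inner ℝ (G x) v : ℝ) + M * ‖v‖ ^ 2 * s - (inner ℝ (G (x + s • v)) v : ℝ)) s := by
    intro s hs
    have h1 : HasDerivAt (fun u : ℝ => g x + u * (inner ℝ (G x) v : ℝ)
        + M / 2 * ‖v‖ ^ 2 * u ^ 2)
        ((inner ℝ (G x) v : ℝ) + M * ‖v‖ ^ 2 * s) s := by
      have ha' : HasDerivAt (fun u : ℝ => u * (inner ℝ (G x) v : ℝ))
          ((inner ℝ (G x) v : ℝ)) s := by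
        simpa using (hasDerivAt_id s).mul_const ((inner ℝ (G x) v : ℝ))
      have hb : HasDerivAt (fun u : ℝ => M / 2 * ‖v‖ ^ 2 * u ^ 2)
          (M / 2 * ‖v‖ ^ 2 * (2 * s)) s := by
        simpa using (hasDerivAt_pow 2 s).const_mul (M / 2 * ‖v‖ ^ 2)
      have := (ha'.const_add (g x)).add hb
      exact this.congr_deriv (by ring)
    exact h1.sub (hφ' s hs)
  have hderiv_nonneg : ∀ s ∈ interior (Icc (0:ℝ) 1), 0 ≤ deriv ψ s := by
    intro s hs
    rw [interior_Icc] at hs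
    have hsIcc : s ∈ Icc (0:ℝ) 1 := ⟨hs.1.le, hs.2.le⟩
    rw [(hψ' s hsIcc).deriv]
    have hz := hseg s hsIcc
    have hinner : (inner ℝ (G (x + s • v)) v : ℝ) - (inner ℝ (G x) v : ℝ)
        ≤ M * ‖v‖ ^ 2 * s := by
      have h1 : (inner ℝ (G (x + s • v)) v : ℝ) - (inner ℝ (G x) v : ℝ)
          = (inner ℝ (G (x + s • v) - G x) v : ℝ) := by
        rw [inner_sub_left]
      rw [h1]
      calc (inner ℝ (G (x + s • v) - G x) v : ℝ)
          ≤ ‖G (x + s • v) - G x‖ * ‖v‖ := real_inner_le_norm _ _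
        _ ≤ (M * ‖x + s • v - x‖) * ‖v‖ := by
            have := hLip _ hz
            exact mul_le_mul_of_nonneg_right this (norm_nonneg _)
        _ = M * ‖v‖ ^ 2 * s := by
            have : ‖x + s • v - x‖ = s * ‖v‖ := by
              simp [norm_smul, abs_of_nonneg hs.1.le]
            rw [this]; ring
    linarith
  have hcont : ContinuousOn ψ (Icc (0:ℝ) 1) := fun s hs =>
    ((hψ' s hs).continuousAt).continuousWithinAt
  have hdiff : DifferentiableOn ℝ ψ (interior (Icc (0:ℝ) 1)) := by
    intro s hs
    rw [interior_Icc] at hs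
    exact ((hψ' s ⟨hs.1.le, hs.2.le⟩).differentiableAt).differentiableWithinAt
  have hmono : MonotoneOn ψ (Icc (0:ℝ) 1) :=
    monotoneOn_of_deriv_nonneg (convex_Icc 0 1) hcont hdiff hderiv_nonneg
  have h01 : ψ 0 ≤ ψ 1 :=
    hmono (by norm_num : (0:ℝ) ∈ Icc (0:ℝ) 1) (by norm_num : (1:ℝ) ∈ Icc (0:ℝ) 1)
      zero_le_one
  have hψ0 : ψ 0 = 0 := by simp [ψ, φ]
  have hψ1 : ψ 1 = g x + (inner ℝ (G x) v : ℝ) + M / 2 * ‖v‖ ^ 2 - g y := by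
    have : φ 1 = g y := by simp [φ, hv]
    simp [ψ, this]
  rw [hψ0, hψ1] at h01
  linarith

/-- under (A1) and (A4), for `q ∈ Q(t)` and `q̃ ∈ U(t)` (with the
segment `[q̃, q]` contained in `Uᵢ(t)`), the distance from `q` to the linearized
constraint set satisfies `d_{Qcᵢ(t,q̃)}(q) ≤ (M/(2α)) |q - q̃|²`. -/
theorem dist_to_linearized_quadratic
    (T : ℝ) (hT : 0 < T) (hd : 1 ≤ d) (hp : 1 ≤ p)
    (g : Fin p → ℝ → E → ℝ)
    (G : Fin p → ℝ → E → E)            -- spatial gradients ∇_q gᵢ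
    (Hess : Fin p → ℝ → E → (E →L[ℝ] E))  -- spatial Hessians D²_q gᵢ
    (U : Fin p → ℝ → Set E)
    (a M : ℝ)
    -- gᵢ convex in the second variable, Q(t) nonempty
    (hconv : ∀ i, ∀ t ∈ Icc (0:ℝ) T, ConvexOn ℝ univ (g i t))
    (hQne : ∀ t ∈ Icc (0:ℝ) T, (Qset g t).Nonempty)
    -- Uᵢ(t) open with Qᵢ(t) ⊆ Uᵢ(t)
    (hUopen : ∀ i, ∀ t ∈ Icc (0:ℝ) T, IsOpen (U i t))
    (hQU : ∀ i, ∀ t ∈ Icc (0:ℝ) T, {q : E | 0 ≤ g i t q} ⊆ U i t)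
    -- gᵢ(t,·) ∈ C²(Uᵢ(t)) with gradient G and Hessian Hess
    (hgrad : ∀ i, ∀ t ∈ Icc (0:ℝ) T, ∀ q ∈ U i t, HasGradientAt (g i t) (G i t q) q)
    (hhess : ∀ i, ∀ t ∈ Icc (0:ℝ) T, ∀ q ∈ U i t, HasFDerivAt (G i t) (Hess i t q) q)
    (hhesscont : ∀ i, ∀ t ∈ Icc (0:ℝ) T, ContinuousOn (Hess i t) (U i t))
    -- (A1) (lower bound)
    (ha : 0 < a) (hM : 0 < M)
    (hA1 : ∀ i, ∀ t ∈ Icc (0:ℝ) T, ∀ q ∈ U i t, a ≤ ‖G i t q‖)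
    -- (A4)
    (hA4 : ∀ i, ∀ t ∈ Icc (0:ℝ) T, ∀ q ∈ U i t, ‖Hess i t q‖ ≤ M) :
    ∀ t ∈ Icc (0:ℝ) T, ∀ i : Fin p, ∀ q ∈ Qset g t, ∀ qt ∈ ⋂ j, U j t,
      segment ℝ qt q ⊆ U i t →
      infDist q (Qci g G i t qt) ≤ M / (2 * a) * ‖q - qt‖ ^ 2 := by
  intro t ht i q hq qt hqt hsegU
  have hqtU : qt ∈ U i t := mem_iInter.mp hqt i
  have hsegU' : ∀ z ∈ segment ℝ qt q, z ∈ U i t := fun z hz => hsegU hz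
  -- Taylor upper bound
  have htay : g i t q ≤ g i t qt + (inner ℝ (G i t qt) (q - qt) : ℝ)
      + M / 2 * ‖q - qt‖ ^ 2 :=
    taylor_upper (fun z hz => hgrad i t ht z (hsegU' z hz))
      (fun z hz => hhess i t ht z (hsegU' z hz))
      (fun z hz => hA4 i t ht z (hsegU' z hz))
  set c : ℝ := g i t qt + (inner ℝ (G i t qt) (q - qt) : ℝ) with hc
  have hRHS : (0:ℝ) ≤ M / (2 * a) * ‖q - qt‖ ^ 2 := by positivity
  by_cases hcnn : 0 ≤ c
  · have hmem : q ∈ Qci g G i t qt := hcnn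
    rw [infDist_zero_of_mem hmem]
    exact hRHS
  · push_neg at hcnn
    have hgq : (0:ℝ) ≤ g i t q := hq i
    have hcb : -c ≤ M / 2 * ‖q - qt‖ ^ 2 := by linarith
    have hGn : a ≤ ‖G i t qt‖ := hA1 i t ht qt hqtU
    have hGpos : (0:ℝ) < ‖G i t qt‖ := lt_of_lt_of_le ha hGn
    set z : E := q + ((-c) / ‖G i t qt‖ ^ 2) • G i t qt with hzdef
    have hzmem : z ∈ Qci g G i t qt := by
      show 0 ≤ g i t qt + (inner ℝ (G i t qt) (z - qt) : ℝ)
      have hz : z - qt = (q - qt) + ((-c) / ‖G i t qt‖ ^ 2) • G i t qt := by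
        rw [hzdef]; abel
      rw [hz, inner_add_right, real_inner_smul_right, real_inner_self_eq_norm_sq]
      have hG2 : (‖G i t qt‖:ℝ) ^ 2 ≠ 0 := by positivity
      have hdd : (-c) / ‖G i t qt‖ ^ 2 * ‖G i t qt‖ ^ 2 = -c :=
        div_mul_cancel₀ _ hG2
      rw [hdd]
      linarith [hc.ge, hc.le]
    have hdist : dist q z = (-c) / ‖G i t qt‖ := by
      rw [dist_eq_norm, hzdef]
      have : q - (q + ((-c) / ‖G i t qt‖ ^ 2) • G i t qt)
          = -(((-c) / ‖G i t qt‖ ^ 2) • G i t qt) := by abel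
      rw [this, norm_neg, norm_smul, Real.norm_eq_abs,
        abs_of_nonneg (div_nonneg (by linarith) (sq_nonneg _))]
      rw [pow_two]
      field_simp
    calc infDist q (Qci g G i t qt) ≤ dist q z := infDist_le_dist_of_mem hzmem
      _ = (-c) / ‖G i t qt‖ := hdist
      _ ≤ (M / 2 * ‖q - qt‖ ^ 2) / a :=
          div_le_div₀ (by positivity) hcb ha hGn
      _ = M / (2 * a) * ‖q - qt‖ ^ 2 := by ring
end
end
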